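/- Let N : ℕ → ℕ and for each n let A_n ⊆ {0,1}^{N(n)} be a monotone increasing property with A_n ≠ ∅ and A_n ≠ {0,1}^{N(n)}, and set f_n(p) = μ_p(A_n), where μ_p is the product measure with weight p at 1. For α ∈ (0,1) let p_α(n) be the unique value with f_n(p_α(n)) = α. Suppose that for every α ∈ (0,1) and every C > 0 there exists n₀ such that p_α(n)·f_n′(p_α(n)) > C for all n > n₀. Then the property has a sharp threshold: for every α ∈ (0,1), every δ > 0 and every function p(n), if p(n) ≥ (1+δ)p_α(n) for all n then f_n(p(n)) → 1 as n → ∞, and if p(n) ≤ (1−δ)p_α(n) for all n then f_n(p(n)) → 0 as n → ∞. -/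

import Mathlib

open Filter Finset

open scoped Classical

/-- The measure `μ_p(A)` of a set `A ⊆ {0,1}^N` under the product measure with
weight `p` at `1` and `1 − p` at `0`. -/
noncomputable def mu (N : ℕ) (A : Finset (Fin N → Bool)) (p : ℝ) : ℝ :=
  ∑ x ∈ A, p ^ (Finset.univ.filter (fun i => x i = true)).card *
    (1 - p) ^ (Finset.univ.filter (fun i => x i = false)).card

lemma mu_eq (Nn : ℕ) (B : Finset (Fin Nn → Bool)) (p : ℝ) :
    mu Nn B p = ∑ x ∈ B, ∏ i, (if x i = true then p else 1 - p) := by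
  unfold mu
  refine Finset.sum_congr rfl fun x _ => ?_
  rw [← Finset.prod_filter_mul_prod_filter_not Finset.univ (fun i => x i = true)]
  congr 1
  · rw [Finset.prod_congr rfl (g := fun _ => p)
      (fun i hi => by simp [(Finset.mem_filter.1 hi).2]), Finset.prod_const]
  · rw [Finset.prod_congr rfl (g := fun _ => 1 - p)
      (fun i hi => by
        have := (Finset.mem_filter.1 hi).2
        simp only [Bool.not_eq_true] at this
        simp [this]), Finset.prod_const]
    congr 1
    apply Finset.card_bij (fun i _ => i)
    · intro i hi
      have := (Finset.mem_filter.1 hi).2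
      simpa using this
    · intro i _ j _ h; exact h
    · intro i hi
      have := (Finset.mem_filter.1 hi).2
      exact ⟨i, Finset.mem_filter.2 ⟨Finset.mem_univ i, by simp [this]⟩, rfl⟩

noncomputable def res (b : Bool) (Nn : ℕ) (B : Finset (Fin (Nn+1) → Bool)) :
    Finset (Fin Nn → Bool) :=
  Finset.univ.filter (fun y => Fin.cons b y ∈ B)

lemma mem_res {b : Bool} {Nn : ℕ} {B : Finset (Fin (Nn+1) → Bool)} {y : Fin Nn → Bool} :
    y ∈ res b Nn B ↔ Fin.cons b y ∈ B := by simp [res]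

lemma mu_succ (Nn : ℕ) (B : Finset (Fin (Nn+1) → Bool)) (p : ℝ) :
    mu (Nn+1) B p = p * mu Nn (res true Nn B) p + (1 - p) * mu Nn (res false Nn B) p := by
  rw [mu_eq, mu_eq, mu_eq, Finset.mul_sum, Finset.mul_sum]
  have hterm : ∀ x : Fin (Nn+1) → Bool,
      (∏ i, (if x i = true then p else 1 - p))
        = (if x 0 = true then p else 1 - p) * ∏ i : Fin Nn, (if x i.succ = true then p else 1 - p) :=
    fun x => Fin.prod_univ_succ _
  rw [Finset.sum_congr rfl (fun x _ => hterm x),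
    ← Finset.sum_filter_add_sum_filter_not B (fun x => x 0 = true)]
  congr 1
  · refine Finset.sum_nbij' (i := fun x => Fin.tail x) (j := fun y => Fin.cons true y)
      ?_ ?_ ?_ ?_ ?_
    · intro x hx
      have hx' := Finset.mem_filter.1 hx
      rw [mem_res]
      have : Fin.cons true (Fin.tail x) = x := by
        rw [show (true : Bool) = x 0 from hx'.2.symm]; exact Fin.cons_self_tail x
      rw [this]; exact hx'.1
    · intro y hy
      refine Finset.mem_filter.2 ⟨mem_res.1 hy, by simp⟩
    · intro x hx
      have hx' := Finset.mem_filter.1 hx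
      rw [show (true : Bool) = x 0 from hx'.2.symm]; exact Fin.cons_self_tail x
    · intro y _; funext i; simp [Fin.tail]
    · intro x hx
      have hx' := Finset.mem_filter.1 hx
      rw [hx'.2]
      simp [Fin.tail]
      exact Or.inl rfl
  · refine Finset.sum_nbij' (i := fun x => Fin.tail x) (j := fun y => Fin.cons false y)
      ?_ ?_ ?_ ?_ ?_
    · intro x hx
      have hx' := Finset.mem_filter.1 hx
      have h0 : x 0 = false := by simpa using hx'.2
      rw [mem_res]
      have : Fin.cons false (Fin.tail x) = x := by
        rw [show (false : Bool) = x 0 from h0.symm]; exact Fin.cons_self_tail x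
      rw [this]; exact hx'.1
    · intro y hy
      refine Finset.mem_filter.2 ⟨mem_res.1 hy, by simp⟩
    · intro x hx
      have hx' := Finset.mem_filter.1 hx
      have h0 : x 0 = false := by simpa using hx'.2
      rw [show (false : Bool) = x 0 from h0.symm]; exact Fin.cons_self_tail x
    · intro y _; funext i; simp [Fin.tail]
    · intro x hx
      have hx' := Finset.mem_filter.1 hx
      have h0 : x 0 = false := by simpa using hx'.2
      rw [h0]
      simp [Fin.tail]
      exact Or.inl rfl

lemma mu_nonneg (Nn : ℕ) (B : Finset (Fin Nn → Bool)) {p : ℝ} (h0 : 0 ≤ p) (h1 : p ≤ 1) :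
    0 ≤ mu Nn B p := by
  rw [mu_eq]
  refine Finset.sum_nonneg fun x _ => Finset.prod_nonneg fun i _ => ?_
  split <;> linarith

lemma mu_mono_set (Nn : ℕ) {B C : Finset (Fin Nn → Bool)} (hBC : B ⊆ C) {p : ℝ}
    (h0 : 0 ≤ p) (h1 : p ≤ 1) : mu Nn B p ≤ mu Nn C p := by
  rw [mu_eq, mu_eq]
  refine Finset.sum_le_sum_of_subset_of_nonneg hBC fun x _ _ => Finset.prod_nonneg fun i _ => ?_
  split <;> linarith

lemma mu_univ (Nn : ℕ) (p : ℝ) : mu Nn (Finset.univ) p = 1 := by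
  induction Nn with
  | zero =>
    rw [mu_eq]
    simp
  | succ n ih =>
    rw [mu_succ]
    have h1 : res true n (Finset.univ) = Finset.univ := by
      apply Finset.eq_univ_iff_forall.2; intro y; exact mem_res.2 (Finset.mem_univ _)
    have h0 : res false n (Finset.univ) = Finset.univ := by
      apply Finset.eq_univ_iff_forall.2; intro y; exact mem_res.2 (Finset.mem_univ _)
    rw [h1, h0, ih]; ring

lemma mu_add_compl (Nn : ℕ) (B : Finset (Fin Nn → Bool)) (p : ℝ) :
    mu Nn B p + mu Nn Bᶜ p = 1 := by
  rw [mu_eq, mu_eq, Finset.sum_add_sum_compl, ← mu_eq, mu_univ]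

lemma mu_le_one (Nn : ℕ) (B : Finset (Fin Nn → Bool)) {p : ℝ} (h0 : 0 ≤ p) (h1 : p ≤ 1) :
    mu Nn B p ≤ 1 := by
  have := mu_mono_set Nn (Finset.subset_univ B) h0 h1
  rwa [mu_univ] at this

lemma mu_contDiff (Nn : ℕ) (B : Finset (Fin Nn → Bool)) :
    ContDiff ℝ (⊤ : ℕ∞) (mu Nn B) := by
  have : mu Nn B = fun p : ℝ => ∑ x ∈ B, p ^ (Finset.univ.filter (fun i => x i = true)).card *
      (1 - p) ^ (Finset.univ.filter (fun i => x i = false)).card := rfl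
  rw [this]
  refine ContDiff.sum fun x _ => ?_
  exact (contDiff_id.pow _).mul ((contDiff_const.sub contDiff_id).pow _)

lemma mu_diff (Nn : ℕ) (B : Finset (Fin Nn → Bool)) : Differentiable ℝ (mu Nn B) :=
  (mu_contDiff Nn B).differentiable (by simp)

lemma mu_deriv_cont (Nn : ℕ) (B : Finset (Fin Nn → Bool)) : Continuous (deriv (mu Nn B)) :=
  (mu_contDiff Nn B).continuous_deriv (by exact_mod_cast le_top)

def IsMono (Nn : ℕ) (B : Finset (Fin Nn → Bool)) : Prop :=
  ∀ x ∈ B, ∀ y : Fin Nn → Bool, (∀ i, x i = true → y i = true) → y ∈ B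

lemma res_mono {Nn : ℕ} {B : Finset (Fin (Nn+1) → Bool)} (hB : IsMono (Nn+1) B) (b : Bool) :
    IsMono Nn (res b Nn B) := by
  intro x hx y hxy
  rw [mem_res] at hx ⊢
  refine hB _ hx _ ?_
  intro i
  refine Fin.cases ?_ ?_ i
  · simp
  · intro j; simpa using hxy j

lemma res_subset {Nn : ℕ} {B : Finset (Fin (Nn+1) → Bool)} (hB : IsMono (Nn+1) B) :
    res false Nn B ⊆ res true Nn B := by
  intro y hy
  rw [mem_res] at hy ⊢
  refine hB _ hy _ ?_
  intro i
  refine Fin.cases ?_ ?_ i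
  · simp
  · intro j; simp

lemma mu_deriv_key : ∀ (Nn : ℕ) (B : Finset (Fin Nn → Bool)), IsMono Nn B →
    ∀ p : ℝ, 0 ≤ p → p ≤ 1 →
    0 ≤ deriv (mu Nn B) p ∧
      mu Nn B p * (1 - mu Nn B p) ≤ p * (1 - p) * deriv (mu Nn B) p := by
  intro Nn
  induction Nn with
  | zero =>
    intro B _ p hp0 hp1
    rcases Finset.eq_empty_or_nonempty B with h | h
    · subst h
      have h1 : mu 0 (∅ : Finset (Fin 0 → Bool)) = fun _ : ℝ => 0 := by
        funext q; simp [mu]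
      rw [h1]
      simp
    · have hBu : B = Finset.univ := by
        rcases h with ⟨x, hx⟩
        apply Finset.eq_univ_iff_forall.2
        intro y
        have : y = x := by funext i; exact i.elim0
        rwa [this]
      subst hBu
      have h1 : mu 0 (Finset.univ : Finset (Fin 0 → Bool)) = fun _ : ℝ => 1 := by
        funext q; rw [mu_univ]
      rw [h1]
      simp
  | succ n ih =>
    intro B hB p hp0 hp1
    set B1 := res true n B with hB1def
    set B0 := res false n B with hB0def
    have hfun : mu (n+1) B = fun q : ℝ => q * mu n B1 q + (1 - q) * mu n B0 q :=
      funext fun q => mu_succ n B q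
    have h1 : HasDerivAt (mu n B1) (deriv (mu n B1) p) p :=
      ((mu_diff n B1) p).hasDerivAt
    have h0 : HasDerivAt (mu n B0) (deriv (mu n B0) p) p :=
      ((mu_diff n B0) p).hasDerivAt
    have hD : HasDerivAt (mu (n+1) B)
        ((1 * mu n B1 p + p * deriv (mu n B1) p) +
          ((0 - 1) * mu n B0 p + (1 - p) * deriv (mu n B0) p)) p := by
      rw [hfun]
      exact ((hasDerivAt_id p).mul h1).add
        (((hasDerivAt_const p (1:ℝ)).sub (hasDerivAt_id p)).mul h0)
    have hDval : deriv (mu (n+1) B) p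
        = mu n B1 p - mu n B0 p + p * deriv (mu n B1) p + (1 - p) * deriv (mu n B0) p := by
      rw [hD.deriv]; ring
    obtain ⟨hd1, hk1⟩ := ih B1 (res_mono hB true) p hp0 hp1
    obtain ⟨hd0, hk0⟩ := ih B0 (res_mono hB false) p hp0 hp1
    have hab : mu n B0 p ≤ mu n B1 p := mu_mono_set n (res_subset hB) hp0 hp1
    have ha0 : 0 ≤ mu n B0 p := mu_nonneg n B0 hp0 hp1
    have hb1 : mu n B1 p ≤ 1 := mu_le_one n B1 hp0 hp1
    have ha1 : mu n B0 p ≤ 1 := mu_le_one n B0 hp0 hp1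
    have hb0 : 0 ≤ mu n B1 p := mu_nonneg n B1 hp0 hp1
    constructor
    · rw [hDval]
      have := mul_nonneg hp0 hd1
      have := mul_nonneg (by linarith : (0:ℝ) ≤ 1 - p) hd0
      linarith
    · rw [hDval, mu_succ n B p]
      set a := mu n B0 p
      set b := mu n B1 p
      set da := deriv (mu n B0) p
      set db := deriv (mu n B1) p
      have key : p * (1-p) * (b - a) * (1 - (b - a)) ≥ 0 := by
        have h1 : 0 ≤ b - a := by linarith
        have h2 : b - a ≤ 1 := by linarith
        have := mul_nonneg (mul_nonneg (mul_nonneg hp0 (by linarith : (0:ℝ) ≤ 1 - p)) h1)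
          (by linarith : (0:ℝ) ≤ 1 - (b - a))
        linarith
      nlinarith [mul_le_mul_of_nonneg_left hk1 hp0,
        mul_le_mul_of_nonneg_left hk0 (by linarith : (0:ℝ) ≤ 1 - p)]

lemma top_mem {Nn : ℕ} {B : Finset (Fin Nn → Bool)} (hB : IsMono Nn B) (hne : B.Nonempty) :
    (fun _ => true) ∈ B := by
  obtain ⟨x, hx⟩ := hne
  exact hB x hx _ (fun i _ => rfl)

lemma bot_not_mem {Nn : ℕ} {B : Finset (Fin Nn → Bool)} (hB : IsMono Nn B)
    (hnf : B ≠ Finset.univ) : (fun _ => false) ∉ B := by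
  intro h
  exact hnf (Finset.eq_univ_iff_forall.2 fun y => hB _ h y (fun i hi => by simp at hi))

lemma mu_zero {Nn : ℕ} {B : Finset (Fin Nn → Bool)} (h : (fun _ => false) ∉ B) :
    mu Nn B 0 = 0 := by
  rw [mu_eq]
  refine Finset.sum_eq_zero fun x hx => ?_
  have : ∃ i, x i = true := by
    by_contra hc
    push_neg at hc
    have : x = fun _ => false := by
      funext i; have := hc i; revert this; cases x i <;> simp
    rw [this] at hx; exact h hx
  obtain ⟨i, hi⟩ := this
  refine Finset.prod_eq_zero (Finset.mem_univ i) ?_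
  simp [hi]

lemma mu_one {Nn : ℕ} {B : Finset (Fin Nn → Bool)} (h : (fun _ => true) ∈ B) :
    mu Nn B 1 = 1 := by
  rw [mu_eq]
  rw [Finset.sum_eq_single (fun _ => true)]
  · simp
  · intro x hx hxne
    have : ∃ i, x i = false := by
      by_contra hc
      push_neg at hc
      exact hxne (by funext i; have := hc i; revert this; cases x i <;> simp)
    obtain ⟨i, hi⟩ := this
    refine Finset.prod_eq_zero (Finset.mem_univ i) ?_
    simp [hi]
  · intro h'; exact absurd h h'

lemma mu_pos {Nn : ℕ} {B : Finset (Fin Nn → Bool)} (h : (fun _ => true) ∈ B) {p : ℝ}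
    (hp0 : 0 < p) (hp1 : p < 1) : 0 < mu Nn B p := by
  rw [mu_eq]
  have hterm : (0:ℝ) < ∏ i : Fin Nn, (if (fun _ => true) i = true then p else 1 - p) := by
    refine Finset.prod_pos fun i _ => by simpa using hp0
  refine lt_of_lt_of_le hterm ?_
  refine Finset.single_le_sum (f := fun x => ∏ i, (if x i = true then p else 1 - p))
    (fun x _ => Finset.prod_nonneg fun i _ => by split <;> linarith) h

lemma mu_lt_one {Nn : ℕ} {B : Finset (Fin Nn → Bool)} (h : (fun _ => false) ∉ B) {p : ℝ}
    (hp0 : 0 < p) (hp1 : p < 1) : mu Nn B p < 1 := by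
  have hc : 0 < mu Nn Bᶜ p := by
    rw [mu_eq]
    have hterm : (0:ℝ) < ∏ i : Fin Nn, (if (fun _ => false) i = true then p else 1 - p) := by
      refine Finset.prod_pos fun i _ => by simpa using hp1
    refine lt_of_lt_of_le hterm ?_
    refine Finset.single_le_sum (f := fun x => ∏ i, (if x i = true then p else 1 - p))
      (fun x _ => Finset.prod_nonneg fun i _ => by split <;> linarith)
      (Finset.mem_compl.2 h)
  have := mu_add_compl Nn B p
  linarith

lemma mu_monotoneOn {Nn : ℕ} {B : Finset (Fin Nn → Bool)} (hB : IsMono Nn B) :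
    MonotoneOn (mu Nn B) (Set.Icc 0 1) := by
  refine monotoneOn_of_deriv_nonneg (convex_Icc 0 1) (mu_diff Nn B).continuous.continuousOn
    (fun x hx => ((mu_diff Nn B) x).differentiableWithinAt) ?_
  intro x hx
  rw [interior_Icc] at hx
  exact (mu_deriv_key Nn B hB x hx.1.le hx.2.le).1

lemma mu_deriv_pos {Nn : ℕ} {B : Finset (Fin Nn → Bool)} (hB : IsMono Nn B)
    (hne : B.Nonempty) (hnf : B ≠ Finset.univ) {p : ℝ} (hp0 : 0 < p) (hp1 : p < 1) :
    0 < deriv (mu Nn B) p := by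
  have h1 := (mu_deriv_key Nn B hB p hp0.le hp1.le).2
  have h2 : 0 < mu Nn B p := mu_pos (top_mem hB hne) hp0 hp1
  have h3 : mu Nn B p < 1 := mu_lt_one (bot_not_mem hB hnf) hp0 hp1
  nlinarith [mul_pos h2 (by linarith : (0:ℝ) < 1 - mu Nn B p), mul_pos hp0 (by linarith : (0:ℝ) < 1 - p)]

lemma mu_strictMonoOn {Nn : ℕ} {B : Finset (Fin Nn → Bool)} (hB : IsMono Nn B)
    (hne : B.Nonempty) (hnf : B ≠ Finset.univ) :
    StrictMonoOn (mu Nn B) (Set.Icc 0 1) := by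
  refine strictMonoOn_of_deriv_pos (convex_Icc 0 1) (mu_diff Nn B).continuous.continuousOn ?_
  intro x hx
  rw [interior_Icc] at hx
  exact mu_deriv_pos hB hne hnf hx.1 hx.2

section Gap

variable (N : ℕ → ℕ) (A : ∀ n, Finset (Fin (N n) → Bool))
    (hmono : ∀ n, ∀ x ∈ A n, ∀ y : Fin (N n) → Bool,
      (∀ i, x i = true → y i = true) → y ∈ A n)
    (hne : ∀ n, (A n).Nonempty) (hnfull : ∀ n, A n ≠ Finset.univ)
    (pα : ℝ → ℕ → ℝ)
    (hpα : ∀ α : ℝ, 0 < α → α < 1 → ∀ n,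
      0 ≤ pα α n ∧ pα α n ≤ 1 ∧ mu (N n) (A n) (pα α n) = α)
    (hpα_unique : ∀ α : ℝ, 0 < α → α < 1 → ∀ n, ∀ q : ℝ,
      0 ≤ q → q ≤ 1 → mu (N n) (A n) q = α → q = pα α n)
    (hderiv : ∀ α : ℝ, 0 < α → α < 1 → ∀ C : ℝ, 0 < C →
      ∃ n₀ : ℕ, ∀ n > n₀, C < pα α n * deriv (fun p => mu (N n) (A n) p) (pα α n))

include N A hmono hne hnfull hpα hpα_unique in
lemma palpha_mem {γ : ℝ} (hγ0 : 0 < γ) (hγ1 : γ < 1) (n : ℕ) :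
    0 < pα γ n ∧ pα γ n < 1 := by
  obtain ⟨h0, h1, hval⟩ := hpα γ hγ0 hγ1 n
  constructor
  · rcases h0.lt_or_eq with h | h
    · exact h
    · exfalso
      rw [← h] at hval
      rw [mu_zero (bot_not_mem (hmono n) (hnfull n))] at hval
      linarith
  · rcases h1.lt_or_eq with h | h
    · exact h
    · exfalso
      rw [h] at hval
      rw [mu_one (top_mem (hmono n) (hne n))] at hval
      linarith

include N A hmono hne hnfull hpα hpα_unique in
lemma palpha_mono {γ γ' : ℝ} (hγ0 : 0 < γ) (hγ'1 : γ' < 1) (hγγ' : γ ≤ γ') (n : ℕ) :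
    pα γ n ≤ pα γ' n := by
  have hγ1 : γ < 1 := lt_of_le_of_lt hγγ' hγ'1
  have hγ'0 : 0 < γ' := lt_of_lt_of_le hγ0 hγγ'
  obtain ⟨h0, h1, hval⟩ := hpα γ hγ0 hγ1 n
  obtain ⟨h0', h1', hval'⟩ := hpα γ' hγ'0 hγ'1 n
  by_contra hc
  push_neg at hc
  have := mu_monotoneOn (hmono n) (Set.mem_Icc.2 ⟨h0', h1'⟩) (Set.mem_Icc.2 ⟨h0, h1⟩) hc.le
  rw [hval, hval'] at this
  have heq : γ = γ' := le_antisymm hγγ' this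
  rw [heq] at hc
  exact lt_irrefl _ hc

include N A hmono hne hnfull hpα hpα_unique in
lemma palpha_continuousOn {a b : ℝ} (ha : 0 < a) (hab : a ≤ b) (hb : b < 1) (n : ℕ) :
    ContinuousOn (fun γ => pα γ n) (Set.Icc a b) := by
  intro γ₀ hγ₀
  obtain ⟨hγ₀a, hγ₀b⟩ := Set.mem_Icc.1 hγ₀
  have hγ₀0 : 0 < γ₀ := lt_of_lt_of_le ha hγ₀a
  have hγ₀1 : γ₀ < 1 := lt_of_le_of_lt hγ₀b hb
  obtain ⟨hx0, hx1⟩ := palpha_mem N A hmono hne hnfull pα hpα hpα_unique hγ₀0 hγ₀1 n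
  set x₀ := pα γ₀ n with hx₀def
  obtain ⟨hx0', hx1', hval₀⟩ := hpα γ₀ hγ₀0 hγ₀1 n
  rw [Metric.continuousWithinAt_iff]
  intro ε hε
  set e := min (ε/2) (min (x₀/2) ((1-x₀)/2)) with hedef
  have he : 0 < e := by
    apply lt_min (by linarith)
    apply lt_min (by linarith) (by linarith)
  have hex : e ≤ x₀/2 := le_trans (min_le_right _ _) (min_le_left _ _)
  have hex' : e ≤ (1-x₀)/2 := le_trans (min_le_right _ _) (min_le_right _ _)
  have hsm := mu_strictMonoOn (hmono n) (hne n) (hnfull n)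
  have hmemM : x₀ - e ∈ Set.Icc (0:ℝ) 1 := Set.mem_Icc.2 ⟨by linarith, by linarith⟩
  have hmem₀ : x₀ ∈ Set.Icc (0:ℝ) 1 := Set.mem_Icc.2 ⟨by linarith, by linarith⟩
  have hmemP : x₀ + e ∈ Set.Icc (0:ℝ) 1 := Set.mem_Icc.2 ⟨by linarith, by linarith⟩
  have hfM : mu (N n) (A n) (x₀ - e) < γ₀ := by
    have := hsm hmemM hmem₀ (by linarith)
    rwa [hval₀] at this
  have hfP : γ₀ < mu (N n) (A n) (x₀ + e) := by
    have := hsm hmem₀ hmemP (by linarith)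
    rwa [hval₀] at this
  refine ⟨min (γ₀ - mu (N n) (A n) (x₀ - e)) (mu (N n) (A n) (x₀ + e) - γ₀),
    lt_min (by linarith) (by linarith), ?_⟩
  intro γ hγ hdist
  obtain ⟨hγa, hγb⟩ := Set.mem_Icc.1 hγ
  have hγ0 : 0 < γ := lt_of_lt_of_le ha hγa
  have hγ1 : γ < 1 := lt_of_le_of_lt hγb hb
  obtain ⟨hq0, hq1, hvalγ⟩ := hpα γ hγ0 hγ1 n
  rw [Real.dist_eq] at hdist ⊢
  have habs := abs_lt.1 hdist
  have hlow : mu (N n) (A n) (x₀ - e) < γ := by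
    have := habs.1
    have h1 := min_le_left (γ₀ - mu (N n) (A n) (x₀ - e)) (mu (N n) (A n) (x₀ + e) - γ₀)
    linarith
  have hhigh : γ < mu (N n) (A n) (x₀ + e) := by
    have := habs.2
    have h1 := min_le_right (γ₀ - mu (N n) (A n) (x₀ - e)) (mu (N n) (A n) (x₀ + e) - γ₀)
    linarith
  have hmemγ : pα γ n ∈ Set.Icc (0:ℝ) 1 := Set.mem_Icc.2 ⟨hq0, hq1⟩
  have hgt : x₀ - e < pα γ n := by
    by_contra hc
    push_neg at hc
    have := mu_monotoneOn (hmono n) hmemγ hmemM hc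
    rw [hvalγ] at this
    linarith
  have hlt : pα γ n < x₀ + e := by
    by_contra hc
    push_neg at hc
    have := mu_monotoneOn (hmono n) hmemP hmemγ hc
    rw [hvalγ] at this
    linarith
  rw [abs_lt]
  constructor <;> [skip; skip] <;>
  · have : e ≤ ε/2 := min_le_left _ _
    linarith


include N A hmono hne hnfull hpα hpα_unique in
lemma palpha_le {a b : ℝ} (ha : 0 < a) (hab : a < b) (hb : b < 1) (n : ℕ) :
    pα a n ≤ pα b n :=
  palpha_mono N A hmono hne hnfull pα hpα hpα_unique ha hb hab.le n

-- the lower bound on p * f'(p) at level γ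
include N A hmono hne hnfull hpα hpα_unique in
lemma h_lower {γ : ℝ} (hγ0 : 0 < γ) (hγ1 : γ < 1) (n : ℕ) :
    γ * (1 - γ) ≤ pα γ n * deriv (mu (N n) (A n)) (pα γ n) := by
  obtain ⟨h0, h1, hval⟩ := hpα γ hγ0 hγ1 n
  have hkey := (mu_deriv_key (N n) (A n) (hmono n) (pα γ n) h0 h1).2
  have hd := (mu_deriv_key (N n) (A n) (hmono n) (pα γ n) h0 h1).1
  rw [hval] at hkey
  nlinarith [mul_nonneg (mul_nonneg h0 hd) (by linarith : (0:ℝ) ≤ 1 - (1 - pα γ n))]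

-- the main gap lemma
include N A hmono hne hnfull hpα hpα_unique hderiv in
lemma gap_lemma {a b θ : ℝ} (ha : 0 < a) (hab : a < b) (hb : b < 1) (hθ : 1 < θ) :
    ∀ᶠ n in atTop, pα b n < θ * pα a n := by
  have ha1 : a < 1 := lt_trans hab hb
  have hb0 : 0 < b := lt_trans ha hab
  set g : ℕ → ℝ → ℝ := fun n γ => (pα γ n * deriv (mu (N n) (A n)) (pα γ n))⁻¹ with hgdef
  set m : ℝ := min (a * (1 - a)) (b * (1 - b)) with hmdef
  have hm : 0 < m := lt_min (by nlinarith) (by nlinarith)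
  have hmg : ∀ γ ∈ Set.Ioc a b, m ≤ γ * (1 - γ) := by
    intro γ hγ
    rcases le_or_gt (γ + a) 1 with h | h
    · refine le_trans (min_le_left _ _) ?_
      nlinarith [hγ.1, hγ.2]
    · refine le_trans (min_le_right _ _) ?_
      nlinarith [hγ.1, hγ.2]
  -- uniform bound on g
  have hbound : ∀ n, ∀ γ ∈ Set.Ioc a b, 0 ≤ g n γ ∧ g n γ ≤ m⁻¹ := by
    intro n γ hγ
    have hγ0 : 0 < γ := lt_trans ha hγ.1
    have hγ1 : γ < 1 := lt_of_le_of_lt hγ.2 hb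
    have hl := h_lower N A hmono hne hnfull pα hpα hpα_unique hγ0 hγ1 n
    have hpos : 0 < γ * (1 - γ) := by nlinarith
    have hmγ := hmg γ hγ
    constructor
    · exact inv_nonneg.2 (le_trans hpos.le hl)
    · rw [hgdef]
      exact inv_anti₀ hm (le_trans hmγ hl)
  -- pointwise convergence of g to 0
  have hlim : ∀ γ ∈ Set.Ioc a b, Tendsto (fun n => g n γ) atTop (nhds 0) := by
    intro γ hγ
    have hγ0 : 0 < γ := lt_trans ha hγ.1
    have hγ1 : γ < 1 := lt_of_le_of_lt hγ.2 hb
    have htop : Tendsto (fun n => pα γ n * deriv (mu (N n) (A n)) (pα γ n)) atTop atTop := by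
      rw [tendsto_atTop]
      intro C
      obtain ⟨n₀, hn₀⟩ := hderiv γ hγ0 hγ1 (max C 1) (lt_of_lt_of_le zero_lt_one (le_max_right _ _))
      rw [eventually_atTop]
      exact ⟨n₀ + 1, fun n hn => le_trans (le_max_left C 1) (hn₀ n (by omega)).le⟩
    exact htop.inv_tendsto_atTop
  -- measurability
  have hmeas : ∀ n, MeasureTheory.AEStronglyMeasurable (g n)
      (MeasureTheory.volume.restrict (Set.Ioc a b)) := by
    intro n
    set Pc : ℝ → ℝ := fun γ => pα (min b (max a γ)) n with hPcdef
    have hPcmono : Monotone Pc := by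
      intro γ γ' hγγ'
      have h1 : min b (max a γ) ≤ min b (max a γ') :=
        min_le_min (le_refl b) (max_le_max (le_refl a) hγγ')
      have hmem1 : a ≤ min b (max a γ) := le_min hab.le (le_max_left _ _)
      have hmem2 : min b (max a γ') ≤ b := min_le_left _ _
      exact palpha_mono N A hmono hne hnfull pα hpα hpα_unique (lt_of_lt_of_le ha hmem1)
        (lt_of_le_of_lt hmem2 hb) h1 n
    have hPcmeas : Measurable Pc := hPcmono.measurable
    have hgmeas : Measurable (fun γ => (Pc γ * deriv (mu (N n) (A n)) (Pc γ))⁻¹) :=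
      ((hPcmeas.mul ((mu_deriv_cont (N n) (A n)).measurable.comp hPcmeas))).inv
    refine (hgmeas.aestronglyMeasurable).congr ?_
    refine (MeasureTheory.ae_restrict_iff' measurableSet_Ioc).mpr
      (MeasureTheory.ae_of_all _ fun γ hγ => ?_)
    have h1 : min b (max a γ) = γ := by
      rw [max_eq_right hγ.1.le, min_eq_right hγ.2]
    simp only [hPcdef, h1, hgdef]
  -- dominated convergence
  have hdct : Tendsto (fun n => ∫ γ in Set.Ioc a b, g n γ) atTop (nhds 0) := by
    have := MeasureTheory.tendsto_integral_of_dominated_convergence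
      (μ := MeasureTheory.volume.restrict (Set.Ioc a b))
      (F := fun n γ => g n γ) (f := fun _ => (0:ℝ)) (bound := fun _ => m⁻¹)
      hmeas
      (MeasureTheory.integrableOn_const measure_Ioc_lt_top.ne)
      (fun n => by
        rw [MeasureTheory.ae_restrict_iff' measurableSet_Ioc]
        refine MeasureTheory.ae_of_all _ fun γ hγ => ?_
        have := hbound n γ hγ
        rw [Real.norm_eq_abs, abs_of_nonneg this.1]
        exact this.2)
      (by
        rw [MeasureTheory.ae_restrict_iff' measurableSet_Ioc]
        exact MeasureTheory.ae_of_all _ fun γ hγ => hlim γ hγ)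
    simpa using this
  -- the identity: log (pα b n / pα a n) = ∫ γ in a..b, g n γ
  have hident : ∀ n, Real.log (pα b n / pα a n) = ∫ γ in a..b, g n γ := by
    intro n
    obtain ⟨hu0, hu1⟩ := palpha_mem N A hmono hne hnfull pα hpα hpα_unique ha ha1 n
    obtain ⟨hv0, hv1⟩ := palpha_mem N A hmono hne hnfull pα hpα hpα_unique hb0 hb n
    obtain ⟨hu0', hu1', hua⟩ := hpα a ha ha1 n
    obtain ⟨hv0', hv1', hvb⟩ := hpα b hb0 hb n
    set u := pα a n
    set v := pα b n
    have huv : u ≤ v := palpha_le N A hmono hne hnfull pα hpα hpα_unique ha hab hb n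
    have huIcc : Set.uIcc u v = Set.Icc u v := Set.uIcc_of_le huv
    -- x in [u,v] maps into [a,b] with f x in (0,1), and pα (f x) n = x
    have hfx : ∀ x ∈ Set.Icc u v, a ≤ mu (N n) (A n) x ∧ mu (N n) (A n) x ≤ b := by
      intro x hx
      have hx01 : x ∈ Set.Icc (0:ℝ) 1 := ⟨le_trans hu0.le hx.1, le_trans hx.2 hv1.le⟩
      constructor
      · calc a = mu (N n) (A n) u := hua.symm
          _ ≤ mu (N n) (A n) x := mu_monotoneOn (hmono n) ⟨hu0.le, hu1.le⟩ hx01 hx.1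
      · calc mu (N n) (A n) x ≤ mu (N n) (A n) v :=
            mu_monotoneOn (hmono n) hx01 ⟨hv0.le, hv1.le⟩ hx.2
          _ = b := hvb
    have hgcont : ContinuousOn (g n) (Set.Icc a b) := by
      have hPcont := palpha_continuousOn N A hmono hne hnfull pα hpα hpα_unique ha hab.le hb n
      have hdcont : ContinuousOn (fun γ => deriv (mu (N n) (A n)) (pα γ n)) (Set.Icc a b) :=
        (mu_deriv_cont (N n) (A n)).comp_continuousOn hPcont
      refine (hPcont.mul hdcont).inv₀ ?_
      intro γ hγ
      have hγ0 : 0 < γ := lt_of_lt_of_le ha hγ.1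
      have hγ1 : γ < 1 := lt_of_le_of_lt hγ.2 hb
      have := h_lower N A hmono hne hnfull pα hpα hpα_unique hγ0 hγ1 n
      have : 0 < pα γ n * deriv (mu (N n) (A n)) (pα γ n) := by nlinarith
      exact ne_of_gt this
    have hsub : ∫ x in u..v, deriv (mu (N n) (A n)) x • ((g n) ∘ (mu (N n) (A n))) x
        = ∫ γ in mu (N n) (A n) u..mu (N n) (A n) v, g n γ := by
      refine intervalIntegral.integral_comp_smul_deriv' ?_ ?_ ?_
      · intro x hx
        exact ((mu_diff (N n) (A n)) x).hasDerivAt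
      · exact (mu_deriv_cont (N n) (A n)).continuousOn
      · refine hgcont.mono ?_
        intro y hy
        obtain ⟨x, hx, rfl⟩ := hy
        rw [huIcc] at hx
        exact ⟨(hfx x hx).1, (hfx x hx).2⟩
    rw [hua, hvb] at hsub
    have hinv : ∫ x in u..v, x⁻¹ = ∫ γ in a..b, g n γ := by
      rw [← hsub]
      refine intervalIntegral.integral_congr ?_
      intro x hx
      rw [huIcc] at hx
      have hx0 : 0 < x := lt_of_lt_of_le hu0 hx.1
      have hx1 : x < 1 := lt_of_le_of_lt hx.2 hv1
      have hfa := (hfx x hx).1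
      have hfb := (hfx x hx).2
      have hf0 : 0 < mu (N n) (A n) x := lt_of_lt_of_le ha hfa
      have hf1 : mu (N n) (A n) x < 1 := lt_of_le_of_lt hfb hb
      have hpx : pα (mu (N n) (A n) x) n = x :=
        (hpα_unique (mu (N n) (A n) x) hf0 hf1 n x hx0.le hx1.le rfl).symm
      have hdpos : 0 < deriv (mu (N n) (A n)) x :=
        mu_deriv_pos (hmono n) (hne n) (hnfull n) hx0 hx1
      show x⁻¹ = deriv (mu (N n) (A n)) x • ((g n) ∘ (mu (N n) (A n))) x
      simp only [Function.comp, hgdef, hpx, smul_eq_mul]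
      rw [mul_inv]
      field_simp
    rw [← hinv]
    rw [integral_inv_of_pos hu0 hv0]
  -- conclusion
  have hloggap : Tendsto (fun n => Real.log (pα b n / pα a n)) atTop (nhds 0) := by
    have : (fun n => Real.log (pα b n / pα a n)) = fun n => ∫ γ in Set.Ioc a b, g n γ := by
      funext n
      rw [hident n, intervalIntegral.integral_of_le hab.le]
    rw [this]
    exact hdct
  have hev := hloggap.eventually (eventually_lt_nhds (Real.log_pos hθ))
  filter_upwards [hev] with n hn
  obtain ⟨hu0, hu1⟩ := palpha_mem N A hmono hne hnfull pα hpα hpα_unique ha ha1 n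
  obtain ⟨hv0, hv1⟩ := palpha_mem N A hmono hne hnfull pα hpα hpα_unique hb0 hb n
  have hratio : pα b n / pα a n < θ := by
    have h2 : 0 < pα b n / pα a n := div_pos hv0 hu0
    by_contra hc
    push_neg at hc
    have := Real.log_le_log_iff (by linarith) h2 |>.2 hc
    linarith
  calc pα b n = (pα b n / pα a n) * pα a n := by field_simp
    _ < θ * pα a n := by
      exact mul_lt_mul_of_pos_right hratio hu0

end Gap

/-- If for every `α ∈ (0,1)` the quantity `p_α(n)·f_n'(p_α(n))` tends to
infinity, then the monotone increasing properties `A n ⊆ {0,1}^{N(n)}` have a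
sharp threshold. -/
theorem sharp_threshold_criterion (N : ℕ → ℕ) (A : ∀ n, Finset (Fin (N n) → Bool))
    (hmono : ∀ n, ∀ x ∈ A n, ∀ y : Fin (N n) → Bool,
      (∀ i, x i = true → y i = true) → y ∈ A n)
    (hne : ∀ n, (A n).Nonempty) (hnfull : ∀ n, A n ≠ Finset.univ)
    (pα : ℝ → ℕ → ℝ)
    (hpα : ∀ α : ℝ, 0 < α → α < 1 → ∀ n,
      0 ≤ pα α n ∧ pα α n ≤ 1 ∧ mu (N n) (A n) (pα α n) = α)
    (hpα_unique : ∀ α : ℝ, 0 < α → α < 1 → ∀ n, ∀ q : ℝ,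
      0 ≤ q → q ≤ 1 → mu (N n) (A n) q = α → q = pα α n)
    (hderiv : ∀ α : ℝ, 0 < α → α < 1 → ∀ C : ℝ, 0 < C →
      ∃ n₀ : ℕ, ∀ n > n₀, C < pα α n * deriv (fun p => mu (N n) (A n) p) (pα α n)) :
    ∀ α : ℝ, 0 < α → α < 1 → ∀ δ : ℝ, 0 < δ → ∀ p : ℕ → ℝ,
      (∀ n, 0 ≤ p n ∧ p n ≤ 1) →
      ((∀ n, (1 + δ) * pα α n ≤ p n) →
        Tendsto (fun n => mu (N n) (A n) (p n)) atTop (nhds 1)) ∧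
      ((∀ n, p n ≤ (1 - δ) * pα α n) →
        Tendsto (fun n => mu (N n) (A n) (p n)) atTop (nhds 0)) := by
  intro α hα0 hα1 δ hδ p hp
  constructor
  · intro hup
    rw [Metric.tendsto_atTop]
    intro ε hε
    set β := max ((α+1)/2) (1 - ε/2) with hβdef
    have hβα : α < β := lt_of_lt_of_le (by linarith) (le_max_left _ _)
    have hβ1 : β < 1 := max_lt (by linarith) (by linarith)
    have hβ0 : 0 < β := lt_trans hα0 hβα
    have hβε : 1 - ε/2 ≤ β := le_max_right _ _
    have hgap := gap_lemma N A hmono hne hnfull pα hpα hpα_unique hderiv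
      (a := α) (b := β) (θ := 1 + δ) hα0 hβα hβ1 (by linarith)
    rw [eventually_atTop] at hgap
    obtain ⟨n₀, hn₀⟩ := hgap
    refine ⟨n₀, fun n hn => ?_⟩
    have h1 : pα β n < (1+δ) * pα α n := hn₀ n hn
    have h2 : (1+δ) * pα α n ≤ p n := hup n
    obtain ⟨hpn0, hpn1⟩ := hp n
    obtain ⟨hq0, hq1, hqval⟩ := hpα β hβ0 hβ1 n
    have hmono' : mu (N n) (A n) (pα β n) ≤ mu (N n) (A n) (p n) :=
      mu_monotoneOn (hmono n) ⟨hq0, hq1⟩ ⟨hpn0, hpn1⟩ (le_of_lt (lt_of_lt_of_le h1 h2))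
    rw [hqval] at hmono'
    have hle1 : mu (N n) (A n) (p n) ≤ 1 := mu_le_one _ _ hpn0 hpn1
    rw [Real.dist_eq, abs_lt]
    constructor <;> linarith
  · intro hdown
    by_cases hδ1 : δ < 1
    · rw [Metric.tendsto_atTop]
      intro ε hε
      set e := min (α/2) (ε/2) with hedef
      have he0 : 0 < e := lt_min (by linarith) (by linarith)
      have heα : e < α := lt_of_le_of_lt (min_le_left _ _) (by linarith)
      have heε : e ≤ ε/2 := min_le_right _ _
      have h1δ : 0 < 1 - δ := by linarith
      have hθ : 1 < (1 - δ)⁻¹ := by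
        have h2 : (1 - δ) * (1 - δ)⁻¹ = 1 := mul_inv_cancel₀ (ne_of_gt h1δ)
        nlinarith [inv_pos.2 h1δ]
      have hgap := gap_lemma N A hmono hne hnfull pα hpα hpα_unique hderiv
        (a := e) (b := α) (θ := (1 - δ)⁻¹) he0 heα hα1 hθ
      rw [eventually_atTop] at hgap
      obtain ⟨n₀, hn₀⟩ := hgap
      refine ⟨n₀, fun n hn => ?_⟩
      have h1 : pα α n < (1 - δ)⁻¹ * pα e n := hn₀ n hn
      have h2 : (1 - δ) * pα α n < pα e n := by
        have := mul_lt_mul_of_pos_left h1 h1δ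
        rwa [← mul_assoc, mul_inv_cancel₀ (ne_of_gt h1δ), one_mul] at this
      have h3 : p n < pα e n := lt_of_le_of_lt (hdown n) h2
      obtain ⟨hpn0, hpn1⟩ := hp n
      obtain ⟨hq0, hq1, hqval⟩ := hpα e he0 (lt_trans heα hα1) n
      have hmono' : mu (N n) (A n) (p n) ≤ mu (N n) (A n) (pα e n) :=
        mu_monotoneOn (hmono n) ⟨hpn0, hpn1⟩ ⟨hq0, hq1⟩ h3.le
      rw [hqval] at hmono'
      have hge0 : 0 ≤ mu (N n) (A n) (p n) := mu_nonneg _ _ hpn0 hpn1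
      rw [Real.dist_eq, abs_lt]
      constructor <;> linarith
    · push_neg at hδ1
      have : (fun n => mu (N n) (A n) (p n)) = fun _ => (0:ℝ) := by
        funext n
        obtain ⟨hpn0, hpn1⟩ := hp n
        have hq0 : 0 ≤ pα α n := (hpα α hα0 hα1 n).1
        have hle : p n ≤ 0 :=
          le_trans (hdown n) (mul_nonpos_of_nonpos_of_nonneg (by linarith) hq0)
        have hpn : p n = 0 := le_antisymm hle hpn0
        rw [hpn]
        exact mu_zero (bot_not_mem (hmono n) (hnfull n))
      rw [this]
      exact tendsto_const_nhds
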